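/- Let L be a relational language and T a set of L-structures each of which is a Gaifman clique. If C₁ and C₂ are T-free L-structures containing a common substructure C, then their free amalgamation over C is T-free. -/
import Mathlib


open FirstOrder

/-- If every structure in the family `T` is a Gaifman clique and `C₁` (domain `A`,
relations `r₁`) and `C₂` (domain `B`, relations `r₂`) are `T`-free, with common induced
substructure expressed by the compatibility hypotheses, then their free amalgamation
(relations `r₁ ∪ r₂`) is `T`-free. -/
theorem stmt14 {L : FirstOrder.Language} [L.IsRelational] {D : Type*}
    (A B : Set D)
    (r₁ r₂ : ∀ n, L.Relations n → Set (Fin n → D))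
    (h₁ : ∀ (n : ℕ) (R : L.Relations n) (t : Fin n → D), t ∈ r₁ n R → ∀ i, t i ∈ A)
    (h₂ : ∀ (n : ℕ) (R : L.Relations n) (t : Fin n → D), t ∈ r₂ n R → ∀ i, t i ∈ B)
    (hc₁ : ∀ (n : ℕ) (R : L.Relations n) (t : Fin n → D),
      t ∈ r₂ n R → (∀ i, t i ∈ A) → t ∈ r₁ n R)
    (hc₂ : ∀ (n : ℕ) (R : L.Relations n) (t : Fin n → D),
      t ∈ r₁ n R → (∀ i, t i ∈ B) → t ∈ r₂ n R)
    {ι : Type*} (T : ι → Type*) [∀ i, L.Structure (T i)]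
    (hclique : ∀ i, ∀ a b : T i, ∃ m : ℕ, 2 ≤ m ∧ ∃ (R : L.Relations m) (c : Fin m → T i),
      (∃ k, c k = a) ∧ (∃ k, c k = b) ∧ FirstOrder.Language.Structure.RelMap R c)
    (hfree₁ : ∀ i, ¬ ∃ h : T i → D, (∀ x, h x ∈ A) ∧
      ∀ (n : ℕ) (R : L.Relations n) (c : Fin n → T i),
        FirstOrder.Language.Structure.RelMap R c → (fun k => h (c k)) ∈ r₁ n R)
    (hfree₂ : ∀ i, ¬ ∃ h : T i → D, (∀ x, h x ∈ B) ∧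
      ∀ (n : ℕ) (R : L.Relations n) (c : Fin n → T i),
        FirstOrder.Language.Structure.RelMap R c → (fun k => h (c k)) ∈ r₂ n R) :
    ∀ i, ¬ ∃ h : T i → D, ∀ (n : ℕ) (R : L.Relations n) (c : Fin n → T i),
      FirstOrder.Language.Structure.RelMap R c → (fun k => h (c k)) ∈ r₁ n R ∪ r₂ n R := by
  intro i hex
  obtain ⟨h, hh⟩ := hex
  -- Either all images in A or all in B
  have key : (∀ x, h x ∈ A) ∨ (∀ x, h x ∈ B) := by
    by_contra hcon
    push_neg at hcon
    obtain ⟨⟨a, ha⟩, ⟨b, hb⟩⟩ := hcon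
    obtain ⟨m, _, R, c, ⟨k₁, hk₁⟩, ⟨k₂, hk₂⟩, hR⟩ := hclique i a b
    rcases hh m R c hR with hr | hr
    · exact ha (hk₁ ▸ h₁ m R _ hr k₁)
    · exact hb (hk₂ ▸ h₂ m R _ hr k₂)
  rcases key with hA | hB
  · exact hfree₁ i ⟨h, hA, fun n R c hR => by
      rcases hh n R c hR with hr | hr
      · exact hr
      · exact hc₁ n R _ hr (fun k => hA (c k))⟩
  · exact hfree₂ i ⟨h, hB, fun n R c hR => by
      rcases hh n R c hR with hr | hr
      · exact hc₂ n R _ hr (fun k => hB (c k))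
      · exact hr⟩
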